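/- The VC dimension of the collection of closed balls of any norm on ℝ² is at most 3. -/

import Mathlib

set_option maxHeartbeats 2000000


/-- Key planar sign lemma. -/
lemma cone_cases (α β α' β' xa ya xc yc xb yb xd yd : ℝ)
    (hα : 0 < α) (hβ : 0 < β) (hα' : 0 < α') (hβ' : 0 < β')
    (ha0 : 0 < xa) (ha1 : 0 < β*xa - β'*ya) (ha2 : 0 < β*xa + α'*ya)
    (hc0 : xc < 0) (hc1 : 0 < -(α*xc) - β'*yc) (hc2 : 0 < -(α*xc) + α'*yc)
    (hb0 : 0 < yb) (hb1 : 0 < β'*yb - β*xb) (hb2 : 0 < β'*yb + α*xb)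
    (hd0 : yd < 0) (hd1 : 0 < -(α'*yd) - β*xd) (hd2 : 0 < -(α'*yd) + α*xd) :
    (∃ s t : ℝ, 0 ≤ s ∧ 0 ≤ t ∧ xb = s*xa + t*xc ∧ yb = s*ya + t*yc)
    ∨ (∃ s t : ℝ, 0 ≤ s ∧ 0 ≤ t ∧ xd = s*xa + t*xc ∧ yd = s*ya + t*yc)
    ∨ (∃ ρ : ℝ, ρ < 0 ∧ xc = ρ*xa ∧ yc = ρ*ya) := by
  rcases lt_trichotomy (xa*yc - ya*xc) 0 with hD | hD | hD
  · -- D < 0 : use the point d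
    right; left
    have hDA : 0 < xd*ya - yd*xa := by
      rcases le_or_gt 0 ya with hya | hya
      · rcases le_or_gt 0 xd with hxd | hxd
        · nlinarith [mul_pos ha0 (neg_pos.2 hd0), mul_nonneg hya hxd]
        · -- hard case
          have hyc : yc < 0 := by nlinarith [mul_nonpos_of_nonneg_of_nonpos hya hc0.le]
          have h3 : α'*ya < α*xa := by
            have h31 : α'*(ya*(-xc)) < α'*(xa*(-yc)) := by nlinarith
            have h32 : α'*(xa*(-yc)) < xa*(α*(-xc)) := by nlinarith [mul_pos ha0 (neg_pos.2 hyc)]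
            nlinarith [mul_pos hα (neg_pos.2 hc0)]
          have h5 : ya*(-xd) < xa*(-yd) := by
            have h51 : α*(ya*(-xd)) ≤ ya*(α'*(-yd)) := by nlinarith
            have h52 : ya*(α'*(-yd)) < α*(xa*(-yd)) := by nlinarith [mul_pos hα' (neg_pos.2 hd0)]
            nlinarith
          nlinarith
      · rcases le_or_gt 0 xd with hxd | hxd
        · have h1 : α'*(-ya) < β*xa := by nlinarith
          have h2 : β*xd < α'*(-yd) := by nlinarith
          have h3 : (-ya)*xd < xa*(-yd) := by
            rcases eq_or_lt_of_le hxd with h | h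
            · nlinarith [mul_pos ha0 (neg_pos.2 hd0)]
            · nlinarith [mul_lt_mul'' h1 h2 (mul_nonneg hα'.le (by linarith)) (mul_nonneg hβ.le hxd)]
          nlinarith
        · nlinarith [mul_pos (neg_pos.2 hya) (neg_pos.2 hxd), mul_pos ha0 (neg_pos.2 hd0)]
    have hCD : 0 < xc*yd - yc*xd := by
      rcases le_or_gt yc 0 with hyc | hyc
      · rcases le_or_gt 0 xd with hxd | hxd
        · nlinarith [mul_pos (neg_pos.2 hc0) (neg_pos.2 hd0), mul_nonneg (neg_nonneg.2 hyc) hxd]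
        · have h1 : α'*(-yc) < α*(-xc) := by nlinarith
          have h2 : α*(-xd) < α'*(-yd) := by nlinarith
          have h3 : (-yc)*(-xd) < (-xc)*(-yd) := by
            rcases eq_or_lt_of_le (neg_nonneg.2 hyc) with h | h
            · nlinarith [mul_pos (neg_pos.2 hc0) (neg_pos.2 hd0)]
            · nlinarith [mul_lt_mul'' h1 h2 (mul_nonneg hα'.le (by linarith)) (mul_nonneg hα.le (by linarith))]
          nlinarith
      · rcases le_or_gt 0 xd with hxd | hxd
        · by_contra hcon
          push_neg at hcon
          have hxd' : 0 < xd := by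
            rcases eq_or_lt_of_le hxd with h | h
            · exfalso; nlinarith [mul_pos (neg_pos.2 hc0) (neg_pos.2 hd0)]
            · exact h
          have hya : ya < 0 := by nlinarith [mul_pos ha0 hyc]
          have h1 : α'*(-ya) < β*xa := by nlinarith
          have h2 : β*xd < α'*(-yd) := by nlinarith
          have h3 : (-ya)*xd < xa*(-yd) := by
            nlinarith [mul_lt_mul'' h1 h2 (mul_nonneg hα'.le (by linarith)) (mul_nonneg hβ.le hxd'.le)]
          nlinarith [mul_lt_mul_of_pos_right h3 (neg_pos.2 hc0), mul_pos hyc hxd']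
        · nlinarith [mul_pos hyc (neg_pos.2 hxd), mul_pos (neg_pos.2 hc0) (neg_pos.2 hd0)]
    refine ⟨(-(xd*yc - yd*xc))/(-(xa*yc - ya*xc)), (-(xa*yd - ya*xd))/(-(xa*yc - ya*xc)), ?_, ?_, ?_, ?_⟩
    · apply div_nonneg _ (by linarith)
      nlinarith
    · apply div_nonneg _ (by linarith)
      nlinarith
    · have hne : -(xa*yc - ya*xc) ≠ 0 := by intro h; rw [neg_eq_zero] at h; linarith
      rw [div_mul_eq_mul_div, div_mul_eq_mul_div, ← add_div, eq_comm, div_eq_iff hne]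
      ring
    · have hne : -(xa*yc - ya*xc) ≠ 0 := by intro h; rw [neg_eq_zero] at h; linarith
      rw [div_mul_eq_mul_div, div_mul_eq_mul_div, ← add_div, eq_comm, div_eq_iff hne]
      ring
  · -- D = 0 : parallel case
    right; right
    refine ⟨xc/xa, div_neg_of_neg_of_pos hc0 ha0, ?_, ?_⟩
    · rw [div_mul_eq_mul_div, eq_comm, div_eq_iff ha0.ne']
    · rw [div_mul_eq_mul_div, eq_comm, div_eq_iff ha0.ne']
      linarith [hD]
  · -- D > 0 : use the point b
    left
    have hAB : 0 < xa*yb - ya*xb := by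
      rcases le_or_gt 0 ya with hya | hya
      · rcases le_or_gt 0 xb with hxb | hxb
        · have h1 : β'*ya < β*xa := by nlinarith
          have h2 : β*xb < β'*yb := by nlinarith
          have h3 : ya*xb < xa*yb := by
            rcases eq_or_lt_of_le hxb with h | h
            · nlinarith [mul_pos ha0 hb0]
            · nlinarith [mul_lt_mul'' h1 h2 (mul_nonneg hβ'.le hya) (mul_nonneg hβ.le hxb)]
          linarith
        · nlinarith [mul_pos ha0 hb0, mul_nonneg hya (neg_nonneg.2 hxb.le)]
      · rcases le_or_gt 0 xb with hxb | hxb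
        · nlinarith [mul_pos ha0 hb0, mul_nonneg (neg_nonneg.2 hya.le) hxb]
        · have hyc : 0 < yc := by nlinarith [mul_pos (neg_pos.2 hya) (neg_pos.2 hc0)]
          have h3 : β'*(-ya) < α*xa := by
            have h31 : β'*((-ya)*(-xc)) < β'*(xa*yc) := by nlinarith
            have h32 : β'*(xa*yc) < xa*(α*(-xc)) := by nlinarith [mul_pos ha0 hyc]
            nlinarith [mul_pos hα (neg_pos.2 hc0)]
          have h5 : (-ya)*(-xb) < xa*yb := by
            have h51 : β'*((-ya)*(-xb)) < α*xa*(-xb) := by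
              nlinarith [mul_lt_mul_of_pos_right h3 (neg_pos.2 hxb)]
            have h52 : α*xa*(-xb) < β'*(xa*yb) := by nlinarith
            nlinarith
          nlinarith
    have hBC : 0 < xb*yc - yb*xc := by
      rcases le_or_gt 0 xb with hxb | hxb
      · rcases le_or_gt 0 yc with hyc | hyc
        · nlinarith [mul_pos hb0 (neg_pos.2 hc0), mul_nonneg hxb hyc]
        · by_contra hcon
          push_neg at hcon
          have hxb' : 0 < xb := by
            rcases eq_or_lt_of_le hxb with h | h
            · exfalso; nlinarith [mul_pos hb0 (neg_pos.2 hc0)]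
            · exact h
          have hya : 0 < ya := by nlinarith [mul_pos ha0 (neg_pos.2 hyc)]
          have h1 : β'*ya < β*xa := by nlinarith
          have h2 : β*xb < β'*yb := by nlinarith
          have h3 : ya*xb < xa*yb := by
            nlinarith [mul_lt_mul'' h1 h2 (mul_nonneg hβ'.le hya.le) (mul_nonneg hβ.le hxb'.le)]
          nlinarith [mul_lt_mul_of_pos_right h3 (neg_pos.2 hc0), mul_pos hya hxb']
      · rcases le_or_gt 0 yc with hyc | hyc
        · have h1 : α*(-xb) < β'*yb := by nlinarith
          have h2 : β'*yc < α*(-xc) := by nlinarith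
          have h3 : (-xb)*yc < yb*(-xc) := by
            rcases eq_or_lt_of_le hyc with h | h
            · nlinarith [mul_pos hb0 (neg_pos.2 hc0)]
            · nlinarith [mul_lt_mul'' h1 h2 (mul_nonneg hα.le (by linarith)) (mul_nonneg hβ'.le hyc)]
          nlinarith
        · nlinarith [mul_pos (neg_pos.2 hxb) (neg_pos.2 hyc), mul_pos hb0 (neg_pos.2 hc0)]
    refine ⟨(xb*yc - yb*xc)/(xa*yc - ya*xc), (xa*yb - ya*xb)/(xa*yc - ya*xc), ?_, ?_, ?_, ?_⟩
    · exact div_nonneg hBC.le hD.le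
    · exact div_nonneg hAB.le hD.le
    · have hne : xa*yc - ya*xc ≠ 0 := by linarith
      rw [div_mul_eq_mul_div, div_mul_eq_mul_div, ← add_div, eq_comm, div_eq_iff hne]
      ring
    · have hne : xa*yc - ya*xc ≠ 0 := by linarith
      rw [div_mul_eq_mul_div, div_mul_eq_mul_div, ← add_div, eq_comm, div_eq_iff hne]
      ring

private def Pr (u z : ℝ × ℝ) : ℝ := u.1 * z.1 + u.2 * z.2

private lemma Pr_sub (u x y : ℝ × ℝ) : Pr u (x - y) = Pr u x - Pr u y := by
  simp [Pr]; ring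

private lemma Pr_smul (u : ℝ × ℝ) (t : ℝ) (z : ℝ × ℝ) : Pr u (t • z) = t * Pr u z := by
  simp [Pr, Prod.smul_fst, Prod.smul_snd, smul_eq_mul]; ring

private lemma Pr_cont (u : ℝ × ℝ) : Continuous (fun z => Pr u z) := by
  unfold Pr; fun_prop

/-- solving a 2x2 system -/
private lemma solve2 {w e g : ℝ × ℝ} (hdet : e.1 * g.2 - e.2 * g.1 ≠ 0)
    (h1 : Pr w e = 0) (h2 : Pr w g = 0) : w = 0 := by
  have hw1 : w.1 * (e.1 * g.2 - e.2 * g.1) = g.2 * (Pr w e) - e.2 * (Pr w g) := by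
    simp [Pr]; ring
  have hw2 : w.2 * (e.1 * g.2 - e.2 * g.1) = e.1 * (Pr w g) - g.1 * (Pr w e) := by
    simp [Pr]; ring
  rw [h1, h2] at hw1 hw2
  simp only [mul_zero, sub_zero, zero_sub, mul_eq_zero, neg_zero] at hw1 hw2
  apply Prod.ext
  · rcases hw1 with h | h
    · exact h
    · exact absurd h hdet
  · rcases hw2 with h | h
    · exact h
    · exact absurd h hdet

private lemma sep_vector {s : Set (ℝ × ℝ)} (hconv : Convex ℝ s) (hcl : IsClosed s)
    {x : ℝ × ℝ} (hx : x ∉ s) : ∃ u : ℝ × ℝ, ∀ y ∈ s, Pr u y < Pr u x := by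
  obtain ⟨f, m, hfs, hfx⟩ := geometric_hahn_banach_closed_point hconv hcl hx
  refine ⟨(f (1, 0), f (0, 1)), fun y hy => ?_⟩
  have hrepr : ∀ z : ℝ × ℝ, Pr (f (1, 0), f (0, 1)) z = f z := by
    intro z
    have hz : z = z.1 • ((1 : ℝ), (0 : ℝ)) + z.2 • ((0 : ℝ), (1 : ℝ)) := by
      apply Prod.ext <;> simp
    conv_rhs => rw [hz]
    rw [map_add, map_smul, map_smul]
    simp [Pr, smul_eq_mul]
    ring
  rw [hrepr, hrepr]
  exact lt_trans (hfs y hy) hfx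

section Core

variable (N : ℝ × ℝ → ℝ)
variable (N_add : ∀ x y, N (x + y) ≤ N x + N y)
variable (N_smul : ∀ (c : ℝ) (x), N (c • x) = |c| * N x)
variable (N_eq_zero : ∀ x, N x = 0 ↔ x = 0)

include N_add N_smul N_eq_zero in
private lemma N_zero : N 0 = 0 := (N_eq_zero 0).mpr rfl

include N_add N_smul N_eq_zero in
private lemma N_nonneg : ∀ x, 0 ≤ N x := by
  intro x
  have h1 : N (x + (-1 : ℝ) • x) ≤ N x + N ((-1 : ℝ) • x) := N_add _ _
  have h2 : N ((-1 : ℝ) • x) = N x := by rw [N_smul]; simp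
  have h3 : x + (-1 : ℝ) • x = 0 := by module
  rw [h3, N_zero N N_add N_smul N_eq_zero, h2] at h1
  linarith

include N_add N_smul N_eq_zero in
private lemma N_cont : Continuous N := by
  set C : ℝ := N (1, 0) + N (0, 1) + 1 with hC
  have hC0 : 0 < C := by
    have := N_nonneg N N_add N_smul N_eq_zero (1, 0)
    have := N_nonneg N N_add N_smul N_eq_zero (0, 1)
    simp only [hC]; linarith
  have hbound : ∀ z : ℝ × ℝ, N z ≤ C * ‖z‖ := by
    intro z
    have hz : z = z.1 • ((1 : ℝ), (0 : ℝ)) + z.2 • ((0 : ℝ), (1 : ℝ)) := by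
      apply Prod.ext <;> simp
    calc N z = N (z.1 • ((1 : ℝ), (0 : ℝ)) + z.2 • ((0 : ℝ), (1 : ℝ))) := by rw [← hz]
      _ ≤ N (z.1 • ((1 : ℝ), (0 : ℝ))) + N (z.2 • ((0 : ℝ), (1 : ℝ))) := N_add _ _
      _ = |z.1| * N (1, 0) + |z.2| * N (0, 1) := by rw [N_smul, N_smul]
      _ ≤ ‖z‖ * N (1, 0) + ‖z‖ * N (0, 1) := by
          have h1 : |z.1| ≤ ‖z‖ := by
            have := norm_fst_le z; simpa using this
          have h2 : |z.2| ≤ ‖z‖ := by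
            have := norm_snd_le z; simpa using this
          have := N_nonneg N N_add N_smul N_eq_zero (1, 0)
          have := N_nonneg N N_add N_smul N_eq_zero (0, 1)
          nlinarith
      _ ≤ C * ‖z‖ := by
          have : (0:ℝ) ≤ ‖z‖ := norm_nonneg z
          simp only [hC]; nlinarith
  have hlip : ∀ x y : ℝ × ℝ, |N x - N y| ≤ C * ‖x - y‖ := by
    intro x y
    have h1 : N x ≤ N (x - y) + N y := by
      have := N_add (x - y) y; simpa using this
    have h2 : N y ≤ N (y - x) + N x := by
      have := N_add (y - x) x; simpa using this
    have h3 : N (x - y) ≤ C * ‖x - y‖ := hbound _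
    have h4 : N (y - x) ≤ C * ‖x - y‖ := by
      have := hbound (y - x); rwa [norm_sub_rev] at this
    rw [abs_le]; constructor <;> linarith
  rw [Metric.continuous_iff]
  intro x ε hε
  refine ⟨ε / C, div_pos hε hC0, fun y hy => ?_⟩
  have := hlip y x
  rw [Real.dist_eq]
  calc |N y - N x| ≤ C * ‖y - x‖ := hlip y x
    _ < C * (ε / C) := by
        apply mul_lt_mul_of_pos_left _ hC0
        rwa [dist_eq_norm] at hy
    _ = ε := by field_simp

include N_add N_smul N_eq_zero in
private lemma ball_convex (r : ℝ × ℝ) (l : ℝ) : Convex ℝ {x : ℝ × ℝ | N (x - r) ≤ l} := by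
  intro x hx y hy s t hs ht hst
  simp only [Set.mem_setOf_eq] at hx hy ⊢
  have hdecomp : s • x + t • y - r = s • (x - r) + t • (y - r) := by
    have h : s • (x - r) + t • (y - r) = s • x + t • y - (s + t) • r := by module
    rw [hst, one_smul] at h
    exact h.symm
  rw [hdecomp]
  calc N (s • (x - r) + t • (y - r)) ≤ N (s • (x - r)) + N (t • (y - r)) := N_add _ _
    _ = |s| * N (x - r) + |t| * N (y - r) := by rw [N_smul, N_smul]
    _ = s * N (x - r) + t * N (y - r) := by rw [abs_of_nonneg hs, abs_of_nonneg ht]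
    _ ≤ s * l + t * l := by
        have := N_nonneg N N_add N_smul N_eq_zero (x - r)
        have := N_nonneg N N_add N_smul N_eq_zero (y - r)
        apply add_le_add <;> nlinarith
    _ = l := by rw [← add_mul, hst, one_mul]

include N_add N_smul N_eq_zero in
private lemma ball_closed (r : ℝ × ℝ) (l : ℝ) : IsClosed {x : ℝ × ℝ | N (x - r) ≤ l} := by
  have : {x : ℝ × ℝ | N (x - r) ≤ l} = (fun x : ℝ × ℝ => N (x - r)) ⁻¹' Set.Iic l := rfl
  rw [this]
  exact IsClosed.preimage ((N_cont N N_add N_smul N_eq_zero).comp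
    (continuous_id.sub continuous_const)) isClosed_Iic

include N_add N_smul N_eq_zero in
private lemma unit_ball_compact : IsCompact {z : ℝ × ℝ | N z ≤ 1} := by
  -- positive lower bound on the sphere
  obtain ⟨z0, hz0mem, hz0min'⟩ := (isCompact_sphere (0 : ℝ × ℝ) 1).exists_isMinOn
    ⟨((1 : ℝ), (0 : ℝ)), by
      simp [Metric.mem_sphere, dist_zero_right, Prod.norm_def]⟩
    ((N_cont N N_add N_smul N_eq_zero).continuousOn)
  have hz0min := isMinOn_iff.mp hz0min'
  have hz0ne : z0 ≠ 0 := by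
    intro h
    rw [Metric.mem_sphere, dist_zero_right, h] at hz0mem
    simp at hz0mem
  have hc : 0 < N z0 := by
    rcases lt_or_eq_of_le (N_nonneg N N_add N_smul N_eq_zero z0) with h | h
    · exact h
    · exact absurd ((N_eq_zero z0).mp h.symm) hz0ne
  have hlow : ∀ z : ℝ × ℝ, N z0 * ‖z‖ ≤ N z := by
    intro z
    rcases eq_or_ne z 0 with rfl | hz
    · simp [N_zero N N_add N_smul N_eq_zero]
    · have hzn : (0:ℝ) < ‖z‖ := norm_pos_iff.2 hz
      have hu : (‖z‖⁻¹ • z) ∈ Metric.sphere (0 : ℝ × ℝ) 1 := by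
        rw [Metric.mem_sphere, dist_zero_right, norm_smul]
        simp [abs_of_pos (inv_pos.2 hzn), inv_mul_cancel₀ hzn.ne']
      have h1 : N z0 ≤ N (‖z‖⁻¹ • z) := hz0min _ hu
      have h2 : N (‖z‖⁻¹ • z) = ‖z‖⁻¹ * N z := by
        rw [N_smul]; rw [abs_of_pos (inv_pos.2 hzn)]
      rw [h2] at h1
      calc N z0 * ‖z‖ ≤ (‖z‖⁻¹ * N z) * ‖z‖ := by nlinarith
        _ = N z := by field_simp
  apply IsCompact.of_isClosed_subset (isCompact_closedBall (0 : ℝ × ℝ) ((N z0)⁻¹))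
  · have : {z : ℝ × ℝ | N z ≤ 1} = N ⁻¹' Set.Iic 1 := rfl
    rw [this]
    exact IsClosed.preimage (N_cont N N_add N_smul N_eq_zero) isClosed_Iic
  · intro z hz
    simp only [Set.mem_setOf_eq] at hz
    rw [Metric.mem_closedBall, dist_zero_right]
    have := hlow z
    have h1 : ‖z‖ * N z0 ≤ 1 := by nlinarith [norm_nonneg z]
    calc ‖z‖ = (‖z‖ * N z0) * (N z0)⁻¹ := by field_simp
      _ ≤ 1 * (N z0)⁻¹ := mul_le_mul_of_nonneg_right h1 (inv_nonneg.2 hc.le)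
      _ = (N z0)⁻¹ := one_mul _


private lemma Pr_add (u x y : ℝ × ℝ) : Pr u (x + y) = Pr u x + Pr u y := by
  simp [Pr]; ring

private lemma Pr_neg (u x : ℝ × ℝ) : Pr u (-x) = -Pr u x := by
  simp [Pr]; ring

private lemma Pr_zero (u : ℝ × ℝ) : Pr u 0 = 0 := by simp [Pr]

private lemma Pr_sub_left (u v z : ℝ × ℝ) : Pr (u - v) z = Pr u z - Pr v z := by
  simp [Pr]; ring

private lemma Pr_add_left (u v z : ℝ × ℝ) : Pr (u + v) z = Pr u z + Pr v z := by
  simp [Pr]; ring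

private lemma Pr_smul_left (t : ℝ) (u z : ℝ × ℝ) : Pr (t • u) z = t * Pr u z := by
  simp [Pr, Prod.smul_fst, Prod.smul_snd, smul_eq_mul]; ring

private lemma collinear_contr (al1 be1 al2 be2 τ xb xc : ℝ)
    (hal1 : 0 < al1) (hbe1 : 0 < be1) (hal2 : 0 < al2) (hbe2 : 0 < be2)
    (hxc : xc < 0)
    (ia1 : 0 < be1 - be2 * τ)
    (ic1 : 0 < -(al1 * xc) - be2 * (τ * xc))
    (ib0 : 0 < be2 * (τ * xb)) (ib1 : 0 < be2 * (τ * xb) - be1 * xb)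
    (ib2 : 0 < be2 * (τ * xb) + al1 * xb) : False := by
  rcases lt_trichotomy xb 0 with hxb | hxb | hxb
  · -- xb < 0 : then τ*xb>0 forces τ<0, ib2 forces al1+be2*τ<0, ic1 forces >0
    nlinarith [mul_pos (neg_pos.2 hxb) (neg_pos.2 hxc)]
  · rw [hxb] at ib0; simp at ib0
  · -- xb > 0 : τ > 0 and be2*τ > be1 from ib1, contradicting ia1
    nlinarith [mul_pos hxb (neg_pos.2 hxc)]

private lemma final_contr (s t κ Pav Pcv Pbv Pa Pc Pb : ℝ)
    (hs : 0 ≤ s) (ht : 0 ≤ t) (hκ : 0 ≤ κ)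
    (FA : κ * Pa < Pav) (FC : κ * Pc < Pcv) (FB' : Pbv < κ * Pb)
    (hv : Pbv = s * Pav + t * Pcv) (hz : Pb ≤ s * Pa + t * Pc) : False := by
  nlinarith [mul_le_mul_of_nonneg_left FA.le hs, mul_le_mul_of_nonneg_left FC.le ht,
    mul_le_mul_of_nonneg_left hz hκ]

include N_add N_smul N_eq_zero in
private lemma gauge_fact (r1 r2 : ℝ × ℝ) (l1 l2 : ℝ) (hl1 : 0 < l1) (hl2 : 0 < l2)
    (u x z : ℝ × ℝ) (hz : N z ≤ 1) (hzmax : ∀ w, N w ≤ 1 → Pr u w ≤ Pr u z)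
    (hsep : ∀ y, N (y - r2) ≤ l2 → Pr u y < Pr u x)
    (hx : N (x - r1) ≤ l1) :
    (l2 - l1) * Pr u z < Pr u (r1 - r2) := by
  have hinv : (0:ℝ) < l1⁻¹ := inv_pos.2 hl1
  have hzz : N (l1⁻¹ • (x - r1)) ≤ 1 := by
    rw [N_smul, abs_of_pos hinv]
    calc l1⁻¹ * N (x - r1) ≤ l1⁻¹ * l1 := by nlinarith
      _ = 1 := inv_mul_cancel₀ hl1.ne'
  have h2 : Pr u (l1⁻¹ • (x - r1)) ≤ Pr u z := hzmax _ hzz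
  have h1 : Pr u (x - r1) = l1 * Pr u (l1⁻¹ • (x - r1)) := by
    rw [Pr_smul]
    field_simp
  have h3 : Pr u (x - r1) ≤ l1 * Pr u z := by nlinarith
  have hxstar : N ((r2 + l2 • z) - r2) ≤ l2 := by
    rw [add_sub_cancel_left, N_smul, abs_of_pos hl2]
    nlinarith
  have h4 : Pr u (r2 + l2 • z) < Pr u x := hsep _ hxstar
  rw [Pr_add, Pr_smul] at h4
  have h6 : Pr u x - Pr u r1 = Pr u (x - r1) := (Pr_sub u x r1).symm
  rw [Pr_sub]
  linarith

include N_add N_smul N_eq_zero in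
private lemma core_contradiction
    (r1 r2 : ℝ × ℝ) (l1 l2 : ℝ) (hl1 : 0 < l1) (hl2 : 0 < l2) (hle : l1 ≤ l2)
    (a c b d p : ℝ × ℝ)
    (haB1 : N (a - r1) ≤ l1) (hcB1 : N (c - r1) ≤ l1)
    (hbB2 : N (b - r2) ≤ l2) (hdB2 : N (d - r2) ≤ l2)
    (haB2 : ¬ N (a - r2) ≤ l2) (hcB2 : ¬ N (c - r2) ≤ l2)
    (hbB1 : ¬ N (b - r1) ≤ l1) (hdB1 : ¬ N (d - r1) ≤ l1)
    (hpac : p ∈ segment ℝ a c) (hpbd : p ∈ segment ℝ b d) : False := by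
  -- the two balls
  set B1 : Set (ℝ × ℝ) := {x | N (x - r1) ≤ l1} with hB1def
  set B2 : Set (ℝ × ℝ) := {x | N (x - r2) ≤ l2} with hB2def
  have hpB1 : N (p - r1) ≤ l1 :=
    (ball_convex N N_add N_smul N_eq_zero r1 l1).segment_subset haB1 hcB1 hpac
  have hpB2 : N (p - r2) ≤ l2 :=
    (ball_convex N N_add N_smul N_eq_zero r2 l2).segment_subset hbB2 hdB2 hpbd
  -- separating vectors
  obtain ⟨ua, hua⟩ := sep_vector (ball_convex N N_add N_smul N_eq_zero r2 l2)
    (ball_closed N N_add N_smul N_eq_zero r2 l2) haB2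
  obtain ⟨uc, huc⟩ := sep_vector (ball_convex N N_add N_smul N_eq_zero r2 l2)
    (ball_closed N N_add N_smul N_eq_zero r2 l2) hcB2
  obtain ⟨ub, hub⟩ := sep_vector (ball_convex N N_add N_smul N_eq_zero r1 l1)
    (ball_closed N N_add N_smul N_eq_zero r1 l1) hbB1
  obtain ⟨ud, hud⟩ := sep_vector (ball_convex N N_add N_smul N_eq_zero r1 l1)
    (ball_closed N N_add N_smul N_eq_zero r1 l1) hdB1
  -- maximizers over the unit ball
  have hK0 : N (0 : ℝ × ℝ) ≤ 1 := by
    rw [N_zero N N_add N_smul N_eq_zero]; exact zero_le_one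
  have hKcomp := unit_ball_compact N N_add N_smul N_eq_zero
  obtain ⟨za, hzaK, hzamax'⟩ := hKcomp.exists_isMaxOn ⟨0, hK0⟩ (Pr_cont ua).continuousOn
  obtain ⟨zc, hzcK, hzcmax'⟩ := hKcomp.exists_isMaxOn ⟨0, hK0⟩ (Pr_cont uc).continuousOn
  obtain ⟨zb, hzbK, hzbmax'⟩ := hKcomp.exists_isMaxOn ⟨0, hK0⟩ (Pr_cont ub).continuousOn
  obtain ⟨zd, hzdK, hzdmax'⟩ := hKcomp.exists_isMaxOn ⟨0, hK0⟩ (Pr_cont ud).continuousOn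
  have hzamax : ∀ w, N w ≤ 1 → Pr ua w ≤ Pr ua za := fun w hw => isMaxOn_iff.mp hzamax' w hw
  have hzcmax : ∀ w, N w ≤ 1 → Pr uc w ≤ Pr uc zc := fun w hw => isMaxOn_iff.mp hzcmax' w hw
  have hzbmax : ∀ w, N w ≤ 1 → Pr ub w ≤ Pr ub zb := fun w hw => isMaxOn_iff.mp hzbmax' w hw
  have hzdmax : ∀ w, N w ≤ 1 → Pr ud w ≤ Pr ud zd := fun w hw => isMaxOn_iff.mp hzdmax' w hw
  have hPza : 0 ≤ Pr ua za := by
    have := hzamax 0 hK0; rwa [Pr_zero] at this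
  have hPzc : 0 ≤ Pr uc zc := by
    have := hzcmax 0 hK0; rwa [Pr_zero] at this
  -- the gauge facts
  have FA : (l2 - l1) * Pr ua za < Pr ua (r1 - r2) :=
    gauge_fact N N_add N_smul N_eq_zero r1 r2 l1 l2 hl1 hl2 ua a za hzaK hzamax hua haB1
  have FC : (l2 - l1) * Pr uc zc < Pr uc (r1 - r2) :=
    gauge_fact N N_add N_smul N_eq_zero r1 r2 l1 l2 hl1 hl2 uc c zc hzcK hzcmax huc hcB1
  have FB : (l1 - l2) * Pr ub zb < Pr ub (r2 - r1) :=
    gauge_fact N N_add N_smul N_eq_zero r2 r1 l2 l1 hl2 hl1 ub b zb hzbK hzbmax hub hbB2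
  have FD : (l1 - l2) * Pr ud zd < Pr ud (r2 - r1) :=
    gauge_fact N N_add N_smul N_eq_zero r2 r1 l2 l1 hl2 hl1 ud d zd hzdK hzdmax hud hdB2
  have FB' : Pr ub (r1 - r2) < (l2 - l1) * Pr ub zb := by
    have h : r2 - r1 = -(r1 - r2) := by ring
    rw [h, Pr_neg] at FB; linarith
  have FD' : Pr ud (r1 - r2) < (l2 - l1) * Pr ud zd := by
    have h : r2 - r1 = -(r1 - r2) := by ring
    rw [h, Pr_neg] at FD; linarith
  -- segment decompositions
  obtain ⟨al1, be1, hal1, hbe1, hsum1, hpt1⟩ := hpac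
  obtain ⟨al2, be2, hal2, hbe2, hsum2, hpt2⟩ := hpbd
  have hbe1pos : 0 < be1 := by
    rcases eq_or_lt_of_le hbe1 with h | h
    · exfalso
      have hpa : p = a := by
        rw [← hpt1, ← h, zero_smul, add_zero, show al1 = 1 by linarith, one_smul]
      have := hua p hpB2
      rw [hpa] at this
      exact lt_irrefl _ this
    · exact h
  have hal1pos : 0 < al1 := by
    rcases eq_or_lt_of_le hal1 with h | h
    · exfalso
      have hpc : p = c := by
        rw [← hpt1, ← h, zero_smul, zero_add, show be1 = 1 by linarith, one_smul]
      have := huc p hpB2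
      rw [hpc] at this
      exact lt_irrefl _ this
    · exact h
  have hbe2pos : 0 < be2 := by
    rcases eq_or_lt_of_le hbe2 with h | h
    · exfalso
      have hpb : p = b := by
        rw [← hpt2, ← h, zero_smul, add_zero, show al2 = 1 by linarith, one_smul]
      have := hub p hpB1
      rw [hpb] at this
      exact lt_irrefl _ this
    · exact h
  have hal2pos : 0 < al2 := by
    rcases eq_or_lt_of_le hal2 with h | h
    · exfalso
      have hpd : p = d := by
        rw [← hpt2, ← h, zero_smul, zero_add, show be2 = 1 by linarith, one_smul]
      have := hud p hpB1
      rw [hpd] at this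
      exact lt_irrefl _ this
    · exact h
  set e : ℝ × ℝ := a - c with hedef
  set g : ℝ × ℝ := b - d with hgdef
  have hape : a - p = be1 • e := by
    have h : a - (al1 • a + be1 • c) = be1 • (a - c) + (1 - al1 - be1) • a := by module
    rw [show (1 - al1 - be1 : ℝ) = 0 by linarith, zero_smul, add_zero] at h
    rw [← hpt1]; exact h
  have hcpe : c - p = (-al1) • e := by
    have h : c - (al1 • a + be1 • c) = (-al1) • (a - c) + (1 - al1 - be1) • c := by module
    rw [show (1 - al1 - be1 : ℝ) = 0 by linarith, zero_smul, add_zero] at h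
    rw [← hpt1]; exact h
  have hbpg : b - p = be2 • g := by
    have h : b - (al2 • b + be2 • d) = be2 • (b - d) + (1 - al2 - be2) • b := by module
    rw [show (1 - al2 - be2 : ℝ) = 0 by linarith, zero_smul, add_zero] at h
    rw [← hpt2]; exact h
  have hdpg : d - p = (-al2) • g := by
    have h : d - (al2 • b + be2 • d) = (-al2) • (b - d) + (1 - al2 - be2) • d := by module
    rw [show (1 - al2 - be2 : ℝ) = 0 by linarith, zero_smul, add_zero] at h
    rw [← hpt2]; exact h
  -- coordinates
  set xa : ℝ := Pr ua e with hxadef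
  set ya : ℝ := Pr ua g with hyadef
  set xc : ℝ := Pr uc e with hxcdef
  set yc : ℝ := Pr uc g with hycdef
  set xb : ℝ := Pr ub e with hxbdef
  set yb : ℝ := Pr ub g with hybdef
  set xd : ℝ := Pr ud e with hxddef
  set yd : ℝ := Pr ud g with hyddef
  -- the twelve inequalities
  have key : ∀ u : ℝ × ℝ, ∀ x y : ℝ × ℝ, Pr u y < Pr u x → 0 < Pr u (x - p) - Pr u (y - p) := by
    intro u x y h
    have h1 : Pr u (x - p) - Pr u (y - p) = Pr u x - Pr u y := by
      rw [Pr_sub, Pr_sub]; ring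
    linarith
  have ia0 : 0 < be1 * xa := by
    have h := hua p hpB2
    have h2 : 0 < Pr ua (a - p) := by
      have := Pr_sub ua a p; linarith
    rwa [hape, Pr_smul] at h2
  have ia1 : 0 < be1 * xa - be2 * ya := by
    have h := key ua a b (hua b hbB2)
    rwa [hape, hbpg, Pr_smul, Pr_smul] at h
  have ia2 : 0 < be1 * xa + al2 * ya := by
    have h := key ua a d (hua d hdB2)
    rw [hape, hdpg, Pr_smul, Pr_smul] at h
    linarith
  have ic0 : 0 < -al1 * xc := by
    have h := huc p hpB2
    have h2 : 0 < Pr uc (c - p) := by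
      have := Pr_sub uc c p; linarith
    rw [hcpe, Pr_smul] at h2
    linarith
  have ic1 : 0 < -al1 * xc - be2 * yc := by
    have h := key uc c b (huc b hbB2)
    rw [hcpe, hbpg, Pr_smul, Pr_smul] at h
    linarith
  have ic2 : 0 < -al1 * xc + al2 * yc := by
    have h := key uc c d (huc d hdB2)
    rw [hcpe, hdpg, Pr_smul, Pr_smul] at h
    linarith
  have ib0 : 0 < be2 * yb := by
    have h := hub p hpB1
    have h2 : 0 < Pr ub (b - p) := by
      have := Pr_sub ub b p; linarith
    rwa [hbpg, Pr_smul] at h2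
  have ib1 : 0 < be2 * yb - be1 * xb := by
    have h := key ub b a (hub a haB1)
    rwa [hbpg, hape, Pr_smul, Pr_smul] at h
  have ib2 : 0 < be2 * yb + al1 * xb := by
    have h := key ub b c (hub c hcB1)
    rw [hbpg, hcpe, Pr_smul, Pr_smul] at h
    linarith
  have id0 : 0 < -al2 * yd := by
    have h := hud p hpB1
    have h2 : 0 < Pr ud (d - p) := by
      have := Pr_sub ud d p; linarith
    rw [hdpg, Pr_smul] at h2
    linarith
  have id1 : 0 < -al2 * yd - be1 * xd := by
    have h := key ud d a (hud a haB1)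
    rw [hdpg, hape, Pr_smul, Pr_smul] at h
    linarith
  have id2 : 0 < -al2 * yd + al1 * xd := by
    have h := key ud d c (hud c hcB1)
    rw [hdpg, hcpe, Pr_smul, Pr_smul] at h
    linarith
  have hxa : 0 < xa := by
    rcases mul_pos_iff.mp ia0 with ⟨_, h⟩ | ⟨h, _⟩
    · exact h
    · linarith
  have hxc : xc < 0 := by
    rcases mul_pos_iff.mp ic0 with ⟨h, _⟩ | ⟨_, h⟩
    · linarith
    · exact h
  have hyb : 0 < yb := by
    rcases mul_pos_iff.mp ib0 with ⟨_, h⟩ | ⟨h, _⟩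
    · exact h
    · linarith
  have hyd : yd < 0 := by
    rcases mul_pos_iff.mp id0 with ⟨h, _⟩ | ⟨_, h⟩
    · linarith
    · exact h
  -- case split on linear independence of e and g
  rcases eq_or_ne (e.1 * g.2 - e.2 * g.1) 0 with hdet | hdet
  · -- collinear case
    have hene : e ≠ 0 := by
      intro h
      rw [hxadef, h, Pr_zero] at hxa
      exact lt_irrefl _ hxa
    obtain ⟨τ, hτ⟩ : ∃ τ : ℝ, g = τ • e := by
      rcases eq_or_ne e.1 0 with h1 | h1
      · have h2 : e.2 ≠ 0 := by
          intro h2; exact hene (Prod.ext h1 h2)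
        refine ⟨g.2 / e.2, Prod.ext ?_ ?_⟩
        · rw [h1, zero_mul] at hdet
          have : e.2 * g.1 = 0 := by linarith
          rcases mul_eq_zero.mp this with h | h
          · exact absurd h h2
          · simp [Prod.smul_fst, h1, h, smul_eq_mul]
        · simp [Prod.smul_snd, smul_eq_mul]
          field_simp
      · refine ⟨g.1 / e.1, Prod.ext ?_ ?_⟩
        · simp [Prod.smul_fst, smul_eq_mul]
          field_simp
        · simp [Prod.smul_snd, smul_eq_mul]
          field_simp
          linarith [hdet]
    have hya' : ya = τ * xa := by rw [hyadef, hτ, Pr_smul]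
    have hyb' : yb = τ * xb := by rw [hybdef, hτ, Pr_smul]
    have hyc' : yc = τ * xc := by rw [hycdef, hτ, Pr_smul]
    rw [hya'] at ia1
    rw [hyb'] at ib0 ib1 ib2
    rw [hyc'] at ic1
    apply collinear_contr al1 be1 al2 be2 τ xb xc hal1pos hbe1pos hal2pos hbe2pos hxc
    · -- 0 < be1 - be2*τ from ia1 (divide by xa > 0)
      have h : 0 < (be1 - be2 * τ) * xa := by
        have e1 : (be1 - be2 * τ) * xa = be1 * xa - be2 * (τ * xa) := by ring
        rw [e1]; exact ia1
      rcases mul_pos_iff.mp h with ⟨h1, _⟩ | ⟨_, h1⟩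
      · exact h1
      · linarith
    · linarith [ic1]
    · exact ib0
    · exact ib1
    · linarith [ib2]
  · -- independent case : apply the cone lemma
    have hcone := cone_cases al1 be1 al2 be2 xa ya xc yc xb yb xd yd
      hal1pos hbe1pos hal2pos hbe2pos
      hxa ia1 ia2 hxc (by linarith) (by linarith) hyb ib1 ib2 hyd (by linarith) (by linarith)
    rcases hcone with ⟨s, t, hs, ht, hxbe, hybe⟩ | ⟨s, t, hs, ht, hxbe, hybe⟩ | ⟨ρ, hρ, hxce, hyce⟩
    · -- b-branch
      have hw : ub - (s • ua + t • uc) = 0 := by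
        apply solve2 hdet
        · rw [Pr_sub_left, Pr_add_left, Pr_smul_left, Pr_smul_left]
          rw [← hxbdef, ← hxadef, ← hxcdef]; linarith
        · rw [Pr_sub_left, Pr_add_left, Pr_smul_left, Pr_smul_left]
          rw [← hybdef, ← hyadef, ← hycdef]; linarith
      have hub_eq : ub = s • ua + t • uc := by
        have := sub_eq_zero.mp hw; exact this
      have hv : Pr ub (r1 - r2) = s * Pr ua (r1 - r2) + t * Pr uc (r1 - r2) := by
        rw [hub_eq, Pr_add_left, Pr_smul_left, Pr_smul_left]
      have hz : Pr ub zb ≤ s * Pr ua za + t * Pr uc zc := by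
        have h1 : Pr ub zb = s * Pr ua zb + t * Pr uc zb := by
          rw [hub_eq, Pr_add_left, Pr_smul_left, Pr_smul_left]
        have h2 : Pr ua zb ≤ Pr ua za := hzamax zb hzbK
        have h3 : Pr uc zb ≤ Pr uc zc := hzcmax zb hzbK
        linarith only [h1, mul_le_mul_of_nonneg_left h2 hs, mul_le_mul_of_nonneg_left h3 ht]
      exact final_contr s t (l2 - l1) (Pr ua (r1 - r2)) (Pr uc (r1 - r2)) (Pr ub (r1 - r2))
        (Pr ua za) (Pr uc zc) (Pr ub zb) hs ht (by linarith) FA FC FB' hv hz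
    · -- d-branch
      have hw : ud - (s • ua + t • uc) = 0 := by
        apply solve2 hdet
        · rw [Pr_sub_left, Pr_add_left, Pr_smul_left, Pr_smul_left]
          rw [← hxddef, ← hxadef, ← hxcdef]; linarith
        · rw [Pr_sub_left, Pr_add_left, Pr_smul_left, Pr_smul_left]
          rw [← hyddef, ← hyadef, ← hycdef]; linarith
      have hud_eq : ud = s • ua + t • uc := sub_eq_zero.mp hw
      have hv : Pr ud (r1 - r2) = s * Pr ua (r1 - r2) + t * Pr uc (r1 - r2) := by
        rw [hud_eq, Pr_add_left, Pr_smul_left, Pr_smul_left]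
      have hz : Pr ud zd ≤ s * Pr ua za + t * Pr uc zc := by
        have h1 : Pr ud zd = s * Pr ua zd + t * Pr uc zd := by
          rw [hud_eq, Pr_add_left, Pr_smul_left, Pr_smul_left]
        have h2 : Pr ua zd ≤ Pr ua za := hzamax zd hzdK
        have h3 : Pr uc zd ≤ Pr uc zc := hzcmax zd hzdK
        linarith only [h1, mul_le_mul_of_nonneg_left h2 hs, mul_le_mul_of_nonneg_left h3 ht]
      exact final_contr s t (l2 - l1) (Pr ua (r1 - r2)) (Pr uc (r1 - r2)) (Pr ud (r1 - r2))
        (Pr ua za) (Pr uc zc) (Pr ud zd) hs ht (by linarith) FA FC FD' hv hz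
    · -- parallel case
      have hw : uc - ρ • ua = 0 := by
        apply solve2 hdet
        · rw [Pr_sub_left, Pr_smul_left, ← hxcdef, ← hxadef]; linarith
        · rw [Pr_sub_left, Pr_smul_left, ← hycdef, ← hyadef]; linarith
      have huc_eq : uc = ρ • ua := sub_eq_zero.mp hw
      have hk : (0:ℝ) ≤ l2 - l1 := by linarith
      have hva : 0 < Pr ua (r1 - r2) := lt_of_le_of_lt (mul_nonneg hk hPza) FA
      have hvc : 0 < Pr uc (r1 - r2) := lt_of_le_of_lt (mul_nonneg hk hPzc) FC
      rw [huc_eq, Pr_smul_left] at hvc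
      rcases mul_pos_iff.mp hvc with ⟨h1, _⟩ | ⟨_, h2⟩
      · linarith
      · linarith

end Core

/-- A collection `C` of subsets of `Ω` shatters a finite set `S` if every subset of `S`
is carved out by some member of `C`. -/
def Shatters {Ω : Type*} (C : Set (Set Ω)) (S : Finset Ω) : Prop :=
  ∀ A ⊆ S, ∃ c ∈ C, (S : Set Ω) ∩ c = (A : Set Ω)

/-- For any norm `N` on `ℝ²` (subadditive, absolutely homogeneous, vanishing only at `0`),
the collection of closed balls `{x : N (x − r) ≤ λ}` with `λ > 0` has VC dimension at
most 3: every finite set it shatters has at most 3 points. -/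
theorem vc_dim_norm_balls_le_three (N : ℝ × ℝ → ℝ)
    (N_add : ∀ x y, N (x + y) ≤ N x + N y)
    (N_smul : ∀ (c : ℝ) (x), N (c • x) = |c| * N x)
    (N_eq_zero : ∀ x, N x = 0 ↔ x = 0)
    (S : Finset (ℝ × ℝ))
    (hS : Shatters {B | ∃ l : ℝ, 0 < l ∧ ∃ r : ℝ × ℝ, B = {x | N (x - r) ≤ l}} S) :
    S.card ≤ 3 := by
  classical
  by_contra hcard
  push_neg at hcard
  obtain ⟨T, hTS, hT4⟩ := Finset.exists_subset_card_eq (show 4 ≤ S.card by omega)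
  set f : Fin 4 → ℝ × ℝ := fun i => ((T.equivFinOfCardEq hT4).symm i : ℝ × ℝ) with hfdef
  have hfS : ∀ i, f i ∈ S := fun i => hTS ((T.equivFinOfCardEq hT4).symm i).2
  have hfinj : Function.Injective f := by
    intro i j hij
    exact (T.equivFinOfCardEq hT4).symm.injective (Subtype.coe_injective hij)
  -- one point in the hull of some of the others is impossible
  have sub1 : ∀ (i : Fin 4) (M : Set (Fin 4)), i ∉ M → f i ∈ convexHull ℝ (f '' M) → False := by
    intro i M hiM hmem
    obtain ⟨Bs, hBC, hcut⟩ := hS (S.erase (f i)) (S.erase_subset _)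
    obtain ⟨l, hl, r, hBdef⟩ := hBC
    have hBconv : Convex ℝ Bs := by
      rw [hBdef]; exact ball_convex N N_add N_smul N_eq_zero r l
    have hsub : f '' M ⊆ Bs := by
      rintro _ ⟨j, hjM, rfl⟩
      have hne : f j ≠ f i := fun h => hiM (hfinj h ▸ hjM)
      have hmem2 : f j ∈ (S : Set (ℝ × ℝ)) ∩ Bs := by
        rw [hcut]
        simp only [Finset.coe_erase, Set.mem_diff, Set.mem_singleton_iff]
        exact ⟨hfS j, hne⟩
      exact hmem2.2
    have h1 : f i ∈ Bs := convexHull_min hsub hBconv hmem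
    have h2 : f i ∈ (S : Set (ℝ × ℝ)) ∩ Bs := ⟨hfS i, h1⟩
    rw [hcut] at h2
    simp only [Finset.coe_erase, Set.mem_diff, Set.mem_singleton_iff] at h2
    exact h2.2 trivial
  -- the crossing (2-2) configuration is impossible
  have sub2 : ∀ i j k l : Fin 4, i ≠ j → i ≠ k → i ≠ l → j ≠ k → j ≠ l → k ≠ l →
      ∀ q : ℝ × ℝ, q ∈ segment ℝ (f i) (f j) → q ∈ segment ℝ (f k) (f l) → False := by
    intro i j k l hij hik hil hjk hjl hkl q hq1 hq2
    obtain ⟨Bs1, ⟨l1, hl1, r1, hB1⟩, hcut1⟩ := hS {f i, f j} (by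
      simp only [Finset.insert_subset_iff, Finset.singleton_subset_iff]
      exact ⟨hfS i, hfS j⟩)
    obtain ⟨Bs2, ⟨l2, hl2, r2, hB2⟩, hcut2⟩ := hS {f k, f l} (by
      simp only [Finset.insert_subset_iff, Finset.singleton_subset_iff]
      exact ⟨hfS k, hfS l⟩)
    have hmem1 : ∀ x, x ∈ (S : Set (ℝ × ℝ)) → (x ∈ Bs1 ↔ (x = f i ∨ x = f j)) := by
      intro x hxS
      constructor
      · intro hxB
        have h : x ∈ (S : Set (ℝ × ℝ)) ∩ Bs1 := ⟨hxS, hxB⟩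
        rw [hcut1] at h
        simpa using h
      · intro h
        have h2 : x ∈ ((({f i, f j} : Finset (ℝ × ℝ))) : Set (ℝ × ℝ)) := by simpa using h
        rw [← hcut1] at h2
        exact h2.2
    have hmem2 : ∀ x, x ∈ (S : Set (ℝ × ℝ)) → (x ∈ Bs2 ↔ (x = f k ∨ x = f l)) := by
      intro x hxS
      constructor
      · intro hxB
        have h : x ∈ (S : Set (ℝ × ℝ)) ∩ Bs2 := ⟨hxS, hxB⟩
        rw [hcut2] at h
        simpa using h
      · intro h
        have h2 : x ∈ ((({f k, f l} : Finset (ℝ × ℝ))) : Set (ℝ × ℝ)) := by simpa using h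
        rw [← hcut2] at h2
        exact h2.2
    have hi1 : N (f i - r1) ≤ l1 := by
      have h := (hmem1 (f i) (hfS i)).mpr (Or.inl rfl); rwa [hB1] at h
    have hj1 : N (f j - r1) ≤ l1 := by
      have h := (hmem1 (f j) (hfS j)).mpr (Or.inr rfl); rwa [hB1] at h
    have hk2 : N (f k - r2) ≤ l2 := by
      have h := (hmem2 (f k) (hfS k)).mpr (Or.inl rfl); rwa [hB2] at h
    have hl2' : N (f l - r2) ≤ l2 := by
      have h := (hmem2 (f l) (hfS l)).mpr (Or.inr rfl); rwa [hB2] at h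
    have hk1 : ¬ N (f k - r1) ≤ l1 := by
      intro hcon
      have h : f k ∈ Bs1 := by rw [hB1]; exact hcon
      rcases (hmem1 (f k) (hfS k)).mp h with h' | h'
      · exact hik (hfinj h').symm
      · exact hjk (hfinj h').symm
    have hl1' : ¬ N (f l - r1) ≤ l1 := by
      intro hcon
      have h : f l ∈ Bs1 := by rw [hB1]; exact hcon
      rcases (hmem1 (f l) (hfS l)).mp h with h' | h'
      · exact hil (hfinj h').symm
      · exact hjl (hfinj h').symm
    have hi2 : ¬ N (f i - r2) ≤ l2 := by
      intro hcon
      have h : f i ∈ Bs2 := by rw [hB2]; exact hcon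
      rcases (hmem2 (f i) (hfS i)).mp h with h' | h'
      · exact hik (hfinj h')
      · exact hil (hfinj h')
    have hj2 : ¬ N (f j - r2) ≤ l2 := by
      intro hcon
      have h : f j ∈ Bs2 := by rw [hB2]; exact hcon
      rcases (hmem2 (f j) (hfS j)).mp h with h' | h'
      · exact hjk (hfinj h')
      · exact hjl (hfinj h')
    rcases le_total l1 l2 with h | h
    · exact core_contradiction N N_add N_smul N_eq_zero r1 r2 l1 l2 hl1 hl2 h
        (f i) (f j) (f k) (f l) q hi1 hj1 hk2 hl2' hi2 hj2 hk1 hl1' hq1 hq2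
    · exact core_contradiction N N_add N_smul N_eq_zero r2 r1 l2 l1 hl2 hl1 h
        (f k) (f l) (f i) (f j) q hk2 hl2' hi1 hj1 hk1 hl1' hi2 hj2 hq2 hq1
  -- Radon partition
  have hnotaff : ¬ AffineIndependent ℝ f := by
    intro haff
    have h1 := haff.card_le_finrank_succ
    have h2 : Module.finrank ℝ ↥(vectorSpan ℝ (Set.range f)) ≤ Module.finrank ℝ (ℝ × ℝ) :=
      Submodule.finrank_le _
    rw [Module.finrank_prod, Module.finrank_self] at h2
    simp only [Fintype.card_fin] at h1
    omega
  obtain ⟨I, q, hqI, hqIc⟩ := Convex.radon_partition hnotaff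
  have hIne : I.Nonempty := by
    by_contra hne
    rw [Set.not_nonempty_iff_eq_empty] at hne
    rw [hne, Set.image_empty, convexHull_empty] at hqI
    exact hqI
  have hIcne : Iᶜ.Nonempty := by
    by_contra hne
    rw [Set.not_nonempty_iff_eq_empty] at hne
    rw [hne, Set.image_empty, convexHull_empty] at hqIc
    exact hqIc
  set J : Finset (Fin 4) := I.toFinset with hJdef
  have hJcoe : (J : Set (Fin 4)) = I := Set.coe_toFinset I
  have hJcne : (Jᶜ : Finset (Fin 4)) = Iᶜ.toFinset := by
    rw [hJdef, Set.toFinset_compl]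
  have hJccoe : ((Jᶜ : Finset (Fin 4)) : Set (Fin 4)) = Iᶜ := by
    rw [hJcne, Set.coe_toFinset]
  have hJpos : 0 < J.card := by
    rw [Finset.card_pos]
    obtain ⟨i, hi⟩ := hIne
    exact ⟨i, by rwa [← hJcoe] at hi⟩
  have hJcpos : 0 < (Jᶜ : Finset (Fin 4)).card := by
    rw [Finset.card_pos]
    obtain ⟨i, hi⟩ := hIcne
    exact ⟨i, by rwa [← hJccoe] at hi⟩
  have hJcard : (Jᶜ : Finset (Fin 4)).card = 4 - J.card := by
    rw [Finset.card_compl, Fintype.card_fin]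
  have hcases : J.card = 1 ∨ J.card = 2 ∨ J.card = 3 := by omega
  rcases hcases with h1 | h2 | h3
  · -- I is a singleton
    obtain ⟨i, hi⟩ := Finset.card_eq_one.mp h1
    have hIi : I = {i} := by rw [← hJcoe, hi]; simp
    have hq : q = f i := by
      rw [hIi, Set.image_singleton, convexHull_singleton] at hqI
      exact hqI
    apply sub1 i Iᶜ (by rw [hIi]; simp) (by rwa [← hq])
  · -- the 2-2 case
    obtain ⟨i, j, hij, hij2⟩ := Finset.card_eq_two.mp h2
    obtain ⟨k, l, hkl, hkl2⟩ := Finset.card_eq_two.mp (by omega : (Jᶜ : Finset (Fin 4)).card = 2)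
    have hik : i ≠ k := by
      intro h
      have : k ∈ J := by rw [hij2]; simp [← h]
      have : k ∉ J := by
        have hk : k ∈ (Jᶜ : Finset (Fin 4)) := by rw [hkl2]; simp
        simpa using Finset.mem_compl.mp hk
      tauto
    have hil : i ≠ l := by
      intro h
      have : l ∈ J := by rw [hij2]; simp [← h]
      have : l ∉ J := by
        have hk : l ∈ (Jᶜ : Finset (Fin 4)) := by rw [hkl2]; simp
        simpa using Finset.mem_compl.mp hk
      tauto
    have hjk : j ≠ k := by
      intro h
      have : k ∈ J := by rw [hij2]; simp [← h]
      have : k ∉ J := by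
        have hk : k ∈ (Jᶜ : Finset (Fin 4)) := by rw [hkl2]; simp
        simpa using Finset.mem_compl.mp hk
      tauto
    have hjl : j ≠ l := by
      intro h
      have : l ∈ J := by rw [hij2]; simp [← h]
      have : l ∉ J := by
        have hk : l ∈ (Jᶜ : Finset (Fin 4)) := by rw [hkl2]; simp
        simpa using Finset.mem_compl.mp hk
      tauto
    have hIij : I = {i, j} := by rw [← hJcoe, hij2]; simp
    have hIckl : Iᶜ = ({k, l} : Set (Fin 4)) := by rw [← hJccoe, hkl2]; simp
    have hq1 : q ∈ segment ℝ (f i) (f j) := by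
      rw [hIij, Set.image_pair, convexHull_pair] at hqI
      exact hqI
    have hq2 : q ∈ segment ℝ (f k) (f l) := by
      rw [hIckl, Set.image_pair, convexHull_pair] at hqIc
      exact hqIc
    exact sub2 i j k l hij hik hil hjk hjl hkl q hq1 hq2
  · -- complement is a singleton
    obtain ⟨i, hi⟩ := Finset.card_eq_one.mp (by omega : (Jᶜ : Finset (Fin 4)).card = 1)
    have hIci : Iᶜ = ({i} : Set (Fin 4)) := by rw [← hJccoe, hi]; simp
    have hq : q = f i := by
      rw [hIci, Set.image_singleton, convexHull_singleton] at hqIc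
      exact hqIc
    have hiI : i ∉ I := by
      have : i ∈ Iᶜ := by rw [hIci]; simp
      simpa using this
    apply sub1 i I hiI (by rwa [← hq])
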